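/- Let A ∈ ℝ^{n×n} be symmetric with ‖A‖_∞ ≤ 1 and let A' be obtained by zeroing out the diagonal and all entries A_{ij} with nnz(A_i)·nnz(A_j) < ε²·nnz(A)/(c·log²n) for a sufficiently large constant c, where nnz(A) ≥ 2/ε². Then for all i, |λ_i(A) − λ_i(A')| ≤ ε·√(nnz(A)). -/

import Mathlib

open Matrix Finset

/-- Number of nonzero entries in row `i` of `A`. -/
noncomputable def nnzRow {n : ℕ} (A : Matrix (Fin n) (Fin n) ℝ) (i : Fin n) : ℕ :=
  (Finset.univ.filter (fun j : Fin n => A i j ≠ 0)).card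

/-- Total number of nonzero entries of `A`. -/
noncomputable def nnzTotal {n : ℕ} (A : Matrix (Fin n) (Fin n) ℝ) : ℕ :=
  ∑ i : Fin n, nnzRow A i

local notation "⟪" x ", " y "⟫" => inner (𝕜 := ℝ) x y

section WeylAux

variable {n : ℕ}

lemma toEuclideanLin_eigen {A : Matrix (Fin n) (Fin n) ℝ} (hA : A.IsHermitian) (j : Fin n) :
    toEuclideanLin A (hA.eigenvectorBasis j) = hA.eigenvalues j • hA.eigenvectorBasis j := by
  have h := hA.mulVec_eigenvectorBasis j
  refine (WithLp.equiv 2 (Fin n → ℝ)).injective ?_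
  simpa using h

lemma inner_sym {A : Matrix (Fin n) (Fin n) ℝ} (hA : A.IsHermitian)
    (x y : EuclideanSpace ℝ (Fin n)) :
    ⟪toEuclideanLin A x, y⟫ = ⟪x, toEuclideanLin A y⟫ :=
  (isHermitian_iff_isSymmetric.1 hA) x y

lemma quad_decomp {A : Matrix (Fin n) (Fin n) ℝ} (hA : A.IsHermitian)
    (x : EuclideanSpace ℝ (Fin n)) :
    ⟪x, toEuclideanLin A x⟫ =
      ∑ j, hA.eigenvalues j * ⟪hA.eigenvectorBasis j, x⟫ ^ 2 := by
  rw [← hA.eigenvectorBasis.sum_inner_mul_inner x (toEuclideanLin A x)]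
  refine Finset.sum_congr rfl fun j _ => ?_
  have h1 : ⟪hA.eigenvectorBasis j, toEuclideanLin A x⟫
      = hA.eigenvalues j * ⟪hA.eigenvectorBasis j, x⟫ := by
    rw [← inner_sym hA, toEuclideanLin_eigen hA j, real_inner_smul_left]
  rw [h1, real_inner_comm x (hA.eigenvectorBasis j)]
  ring

lemma norm_sq_decomp (b : OrthonormalBasis (Fin n) ℝ (EuclideanSpace ℝ (Fin n)))
    (x : EuclideanSpace ℝ (Fin n)) :
    ∑ j, ⟪b j, x⟫ ^ 2 = ‖x‖ ^ 2 := by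
  have h := b.sum_inner_mul_inner x x
  rw [real_inner_self_eq_norm_sq] at h
  rw [← h]
  refine Finset.sum_congr rfl fun j _ => ?_
  rw [real_inner_comm x (b j), pow_two]

lemma inner_eq_zero_of_mem_span {v : Fin n → EuclideanSpace ℝ (Fin n)}
    (hv : Orthonormal ℝ v) {s : Set (Fin n)} {j : Fin n} (hj : j ∉ s)
    {x : EuclideanSpace ℝ (Fin n)} (hx : x ∈ Submodule.span ℝ (v '' s)) :
    ⟪v j, x⟫ = 0 := by
  induction hx using Submodule.span_induction with
  | mem y hy =>
      obtain ⟨k, hk, rfl⟩ := hy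
      exact hv.2 (fun h : j = k => hj (h ▸ hk))
  | zero => simp
  | add y z _ _ hy hz => rw [inner_add_right, hy, hz, add_zero]
  | smul a y _ hy => rw [real_inner_smul_right, hy, mul_zero]

lemma rayleigh_ge {A : Matrix (Fin n) (Fin n) ℝ} (hA : A.IsHermitian)
    (s : Finset (Fin n)) (lb : ℝ) (hs : ∀ j ∈ s, lb ≤ hA.eigenvalues j)
    (x : EuclideanSpace ℝ (Fin n))
    (hx : x ∈ Submodule.span ℝ (hA.eigenvectorBasis '' ↑s)) :
    lb * ‖x‖ ^ 2 ≤ ⟪x, toEuclideanLin A x⟫ := by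
  rw [quad_decomp hA, ← norm_sq_decomp hA.eigenvectorBasis x, Finset.mul_sum]
  refine Finset.sum_le_sum fun j _ => ?_
  by_cases hj : j ∈ s
  · exact mul_le_mul_of_nonneg_right (hs j hj) (sq_nonneg _)
  · rw [inner_eq_zero_of_mem_span hA.eigenvectorBasis.orthonormal hj hx]
    simp

lemma rayleigh_le {A : Matrix (Fin n) (Fin n) ℝ} (hA : A.IsHermitian)
    (s : Finset (Fin n)) (ub : ℝ) (hs : ∀ j ∈ s, hA.eigenvalues j ≤ ub)
    (x : EuclideanSpace ℝ (Fin n))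
    (hx : x ∈ Submodule.span ℝ (hA.eigenvectorBasis '' ↑s)) :
    ⟪x, toEuclideanLin A x⟫ ≤ ub * ‖x‖ ^ 2 := by
  rw [quad_decomp hA, ← norm_sq_decomp hA.eigenvectorBasis x, Finset.mul_sum]
  refine Finset.sum_le_sum fun j _ => ?_
  by_cases hj : j ∈ s
  · exact mul_le_mul_of_nonneg_right (hs j hj) (sq_nonneg _)
  · rw [inner_eq_zero_of_mem_span hA.eigenvectorBasis.orthonormal hj hx]
    simp

lemma finrank_span_ob (b : OrthonormalBasis (Fin n) ℝ (EuclideanSpace ℝ (Fin n)))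
    (s : Finset (Fin n)) :
    Module.finrank ℝ (Submodule.span ℝ (b '' ↑s)) = s.card := by
  have h1 : (b '' ↑s) = Set.range (fun k : ↥(↑s : Set (Fin n)) => b k) :=
    Set.image_eq_range _ _
  rw [h1]
  have li : LinearIndependent ℝ (fun k : ↥(↑s : Set (Fin n)) => b ↑k) :=
    (b.orthonormal.comp _ Subtype.val_injective).linearIndependent
  rw [finrank_span_eq_card li]
  simp

lemma weyl_one {A B : Matrix (Fin n) (Fin n) ℝ} (hA : A.IsHermitian) (hB : B.IsHermitian)
    (σ τ : Equiv.Perm (Fin n)) (hσ : Antitone fun i => hA.eigenvalues (σ i))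
    (hτ : Antitone fun i => hB.eigenvalues (τ i)) (C : ℝ)
    (hC : ∀ x : EuclideanSpace ℝ (Fin n), ⟪x, toEuclideanLin (A - B) x⟫ ≤ C * ‖x‖ ^ 2)
    (i : Fin n) : hA.eigenvalues (σ i) ≤ hB.eigenvalues (τ i) + C := by
  classical
  set U := Submodule.span ℝ (hA.eigenvectorBasis '' ↑((Finset.Iic i).image σ)) with hUdef
  set W := Submodule.span ℝ (hB.eigenvectorBasis '' ↑((Finset.Ici i).image τ)) with hWdef
  have hU : Module.finrank ℝ U = i.val + 1 := by
    rw [hUdef, finrank_span_ob, Finset.card_image_of_injective _ σ.injective, Fin.card_Iic]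
  have hW : Module.finrank ℝ W = n - i.val := by
    rw [hWdef, finrank_span_ob, Finset.card_image_of_injective _ τ.injective, Fin.card_Ici]
  have hsum := Submodule.finrank_sup_add_finrank_inf_eq U W
  have hle : Module.finrank ℝ ↥(U ⊔ W) ≤ n :=
    le_trans (Submodule.finrank_le _) (by simp)
  have hpos : 0 < Module.finrank ℝ ↥(U ⊓ W) := by
    have := i.isLt
    omega
  have hne : U ⊓ W ≠ ⊥ := by
    intro h
    rw [h, finrank_bot] at hpos
    exact lt_irrefl 0 hpos
  obtain ⟨x, hxUW, hx0⟩ := (Submodule.ne_bot_iff _).1 hne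
  have hnorm : 0 < ‖x‖ ^ 2 := pow_pos (norm_pos_iff.2 hx0) 2
  have h1 : hA.eigenvalues (σ i) * ‖x‖ ^ 2 ≤ ⟪x, toEuclideanLin A x⟫ := by
    refine rayleigh_ge hA _ _ (fun j hj => ?_) x hxUW.1
    obtain ⟨k, hk, rfl⟩ := Finset.mem_image.1 hj
    exact hσ (Finset.mem_Iic.1 hk)
  have h2 : ⟪x, toEuclideanLin B x⟫ ≤ hB.eigenvalues (τ i) * ‖x‖ ^ 2 := by
    refine rayleigh_le hB _ _ (fun j hj => ?_) x hxUW.2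
    obtain ⟨k, hk, rfl⟩ := Finset.mem_image.1 hj
    exact hτ (Finset.mem_Ici.1 hk)
  have h3 : ⟪x, toEuclideanLin (A - B) x⟫
      = ⟪x, toEuclideanLin A x⟫ - ⟪x, toEuclideanLin B x⟫ := by
    rw [map_sub]
    simp [inner_sub_right]
  have key : hA.eigenvalues (σ i) * ‖x‖ ^ 2 ≤ (hB.eigenvalues (τ i) + C) * ‖x‖ ^ 2 := by
    nlinarith [hC x]
  exact le_of_mul_le_mul_right key hnorm

lemma inner_toEuclideanLin_eq_sum (M : Matrix (Fin n) (Fin n) ℝ)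
    (x : EuclideanSpace ℝ (Fin n)) :
    ⟪x, toEuclideanLin M x⟫ = ∑ i, ∑ j, M i j * x i * x j := by
  rw [PiLp.inner_apply]
  simp only [toEuclideanLin_apply, RCLike.inner_apply, starRingEnd_apply, star_trivial]
  refine Finset.sum_congr rfl fun i _ => ?_
  rw [mul_comm]
  show x i * (M *ᵥ (fun j => x j)) i = _
  rw [mulVec, dotProduct, Finset.mul_sum]
  refine Finset.sum_congr rfl fun j _ => ?_
  ring

end WeylAux
set_option maxHeartbeats 1600000 in
/-- **Zeroing out entries in sparse rows/columns barely perturbs the spectrum.**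
There is a sufficiently large constant `c` such that for any symmetric `A ∈ ℝ^{n×n}`
with `‖A‖_∞ ≤ 1` and `nnz(A) ≥ 2/ε²`, if `A'` is obtained from `A` by zeroing the
diagonal and all entries `A i j` with `nnz(A_i)·nnz(A_j) < ε² nnz(A)/(c log² n)`,
then `|λ_i(A) − λ_i(A')| ≤ ε √(nnz(A))` for all `i` (eigenvalues sorted decreasingly). -/
theorem zeroing_perturbation_bound :
    ∃ c : ℝ, 0 < c ∧
      ∀ (n : ℕ) (A A' : Matrix (Fin n) (Fin n) ℝ) (ε : ℝ)
        (hA : A.IsHermitian) (hA' : A'.IsHermitian),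
        (∀ i j, |A i j| ≤ 1) →
        ε ∈ Set.Ioo (0 : ℝ) 1 →
        2 / ε ^ 2 ≤ (nnzTotal A : ℝ) →
        (∀ i j : Fin n, (i = j ∨
            ((nnzRow A i : ℝ) * (nnzRow A j : ℝ) <
              ε ^ 2 * (nnzTotal A : ℝ) / (c * (Real.log n) ^ 2))) → A' i j = 0) →
        (∀ i j : Fin n, ¬(i = j ∨
            ((nnzRow A i : ℝ) * (nnzRow A j : ℝ) <
              ε ^ 2 * (nnzTotal A : ℝ) / (c * (Real.log n) ^ 2))) → A' i j = A i j) →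
        ∀ (σ τ : Equiv.Perm (Fin n)),
          Antitone (fun i => hA.eigenvalues (σ i)) →
          Antitone (fun i => hA'.eigenvalues (τ i)) →
          ∀ i : Fin n,
            |hA.eigenvalues (σ i) - hA'.eigenvalues (τ i)|
              ≤ ε * Real.sqrt (nnzTotal A) := by
  refine ⟨100, by norm_num, ?_⟩
  intro n A A' ε hA hA' hbound hε hm h0 h1 σ τ hσ hτ i
  classical
  set m : ℝ := (nnzTotal A : ℝ) with hmdef
  set T : ℝ := ε ^ 2 * m / (100 * (Real.log n) ^ 2) with hTdef
  have hε0 : 0 < ε := hε.1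
  have hε1 : ε < 1 := hε.2
  have hm0 : 0 ≤ m := by rw [hmdef]; positivity
  have hm2 : 2 ≤ ε ^ 2 * m := by
    have := (div_le_iff₀ (pow_pos hε0 2)).1 hm
    nlinarith
  have hT0 : 0 ≤ T := by
    apply div_nonneg
    · positivity
    · positivity
  have hsm : 0 ≤ Real.sqrt m := Real.sqrt_nonneg m
  have hεm : 4 / 3 ≤ ε * Real.sqrt m := by
    have h2 : Real.sqrt 2 ≤ ε * Real.sqrt m := by
      have he : ε * Real.sqrt m = Real.sqrt (ε ^ 2 * m) := by
        rw [Real.sqrt_mul (sq_nonneg ε), Real.sqrt_sq hε0.le]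
      rw [he]
      exact Real.sqrt_le_sqrt hm2
    nlinarith [Real.sq_sqrt (show (0:ℝ) ≤ 2 by norm_num), Real.sqrt_nonneg 2]
  have hTle : Real.sqrt T ≤ ε * Real.sqrt m / 4 := by
    have hTb : T ≤ (ε * Real.sqrt m / 4) ^ 2 := by
      have hsq : (ε * Real.sqrt m / 4) ^ 2 = ε ^ 2 * m / 16 := by
        rw [div_pow, mul_pow, Real.sq_sqrt hm0]
        norm_num
      rw [hsq, hTdef]
      rcases Nat.lt_or_ge n 2 with hn | hn
      · have hlog : Real.log (n : ℝ) = 0 := by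
          have h01 : n = 0 ∨ n = 1 := by omega
          rcases h01 with h | h <;> subst h <;> simp
        rw [hlog]
        norm_num
        positivity
      · have hlog : Real.log 2 ≤ Real.log (n : ℝ) := by
          apply Real.log_le_log (by norm_num)
          exact_mod_cast hn
        have hl2 := Real.log_two_gt_d9
        have h16 : (16:ℝ) ≤ 100 * (Real.log (n:ℝ)) ^ 2 := by nlinarith
        exact div_le_div_of_nonneg_left (by positivity) (by norm_num) h16
    calc Real.sqrt T ≤ Real.sqrt ((ε * Real.sqrt m / 4) ^ 2) := Real.sqrt_le_sqrt hTb
      _ = ε * Real.sqrt m / 4 := Real.sqrt_sq (by positivity)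
  -- the difference matrix
  set M : Matrix (Fin n) (Fin n) ℝ := A - A' with hMdef
  have hAsymm : ∀ i j, A j i = A i j := fun i j => by simpa using hA.apply i j
  have hA'symm : ∀ i j, A' j i = A' i j := fun i j => by simpa using hA'.apply i j
  have hMsymm : ∀ i j, M j i = M i j := fun i j => by
    simp [hMdef, Matrix.sub_apply, hAsymm i j, hA'symm i j]
  set r : Fin n → ℝ := fun i => (nnzRow A i : ℝ) with hrdef
  have hr0 : ∀ i, 0 ≤ r i := fun i => Nat.cast_nonneg _
  have hr1 : ∀ i j, A i j ≠ 0 → 1 ≤ r i := by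
    intro i j hij
    have h : 0 < nnzRow A i := Finset.card_pos.2 ⟨j, by simp [nnzRow, hij]⟩
    have : (1:ℝ) ≤ (nnzRow A i : ℝ) := by exact_mod_cast h
    exact this
  have hdiagM : ∀ i, M i i = A i i := by
    intro i
    simp [hMdef, Matrix.sub_apply, h0 i i (Or.inl rfl)]
  have hoff : ∀ i j, i ≠ j → M i j ≠ 0 →
      A i j ≠ 0 ∧ r i * r j < T ∧ M i j = A i j := by
    intro i j hij hne
    by_cases hc : r i * r j < T
    · have h' := h0 i j (Or.inr hc)
      have hM : M i j = A i j := by simp [hMdef, Matrix.sub_apply, h']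
      refine ⟨fun h => hne (by rw [hM, h]), hc, hM⟩
    · exfalso
      apply hne
      have h' := h1 i j (by rintro (rfl | hc') <;> [exact hij rfl; exact hc hc'])
      simp [hMdef, Matrix.sub_apply, h']
  have hMbound : ∀ i j, |M i j| ≤ 1 := by
    intro i j
    by_cases hij : i = j
    · subst hij
      rw [hdiagM]
      exact hbound i i
    · by_cases hne : M i j = 0
      · simp [hne]
      · rw [(hoff i j hij hne).2.2]
        exact hbound i j
  have hx2 : ∀ x : EuclideanSpace ℝ (Fin n), ∑ k, x k ^ 2 = ‖x‖ ^ 2 := by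
    intro x
    rw [← real_inner_self_eq_norm_sq, PiLp.inner_apply]
    simp [pow_two]
  -- the quadratic form bound
  have hQ : ∀ x : EuclideanSpace ℝ (Fin n),
      |⟪x, toEuclideanLin M x⟫| ≤ (1 + Real.sqrt T) * ‖x‖ ^ 2 := by
    intro x
    rw [inner_toEuclideanLin_eq_sum]
    set t : Fin n → Fin n → ℝ := fun a b =>
      if a = b then 0 else |M a b| * (Real.sqrt (r b) / Real.sqrt (r a)) * x a ^ 2 with htdef
    have ht0 : ∀ a b, 0 ≤ t a b := by
      intro a b
      rw [htdef]
      dsimp only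
      split
      · exact le_refl 0
      · positivity
    have hterm : ∀ a b, |M a b * x a * x b| ≤
        (if a = b then x a ^ 2 else 0) + (t a b + t b a) / 2 := by
      intro a b
      rw [abs_mul, abs_mul]
      by_cases hab : a = b
      · subst hab
        rw [if_pos rfl]
        have h1' : t a a = 0 := by simp [htdef]
        rw [h1']
        nlinarith [hMbound a a, abs_nonneg (x a), sq_abs (x a), abs_nonneg (M a a)]
      · rw [if_neg hab]
        by_cases hne : M a b = 0
        · rw [hne]
          simp only [abs_zero, zero_mul]
          have := ht0 a b
          have := ht0 b a
          linarith
        · obtain ⟨hA0, hcond, hMA⟩ := hoff a b hab hne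
          have hAba : A b a ≠ 0 := by rw [hAsymm]; exact hA0
          have hra : 1 ≤ r a := hr1 a b hA0
          have hrb : 1 ≤ r b := hr1 b a hAba
          have hsa : 0 < Real.sqrt (r a) := Real.sqrt_pos.2 (by linarith)
          have hsb : 0 < Real.sqrt (r b) := Real.sqrt_pos.2 (by linarith)
          have hMba : |M b a| = |M a b| := by rw [hMsymm]
          have e1 : t a b = |M a b| * (Real.sqrt (r b) / Real.sqrt (r a)) * x a ^ 2 := by
            rw [htdef]
            dsimp only
            rw [if_neg hab]
          have e2 : t b a = |M a b| * (Real.sqrt (r a) / Real.sqrt (r b)) * x b ^ 2 := by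
            rw [htdef]
            dsimp only
            rw [if_neg (fun h => hab h.symm), hMba]
          rw [e1, e2, ← sq_abs (x a), ← sq_abs (x b), zero_add]
          set p := Real.sqrt (r a)
          set q := Real.sqrt (r b)
          have key : |x a| * |x b| ≤ ((q / p) * |x a| ^ 2 + (p / q) * |x b| ^ 2) / 2 := by
            rw [← sub_nonneg]
            have hid : ((q / p) * |x a| ^ 2 + (p / q) * |x b| ^ 2) / 2 - |x a| * |x b|
                = (q * |x a| - p * |x b|) ^ 2 / (2 * p * q) := by
              have hp : p ≠ 0 := hsa.ne'
              have hq : q ≠ 0 := hsb.ne'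
              field_simp
              ring_nf
            rw [hid]
            positivity
          calc |M a b| * |x a| * |x b| = |M a b| * (|x a| * |x b|) := by ring
            _ ≤ |M a b| * (((q / p) * |x a| ^ 2 + (p / q) * |x b| ^ 2) / 2) :=
                mul_le_mul_of_nonneg_left key (abs_nonneg _)
            _ = (|M a b| * (q / p) * |x a| ^ 2 + |M a b| * (p / q) * |x b| ^ 2) / 2 := by
                ring
    have hrow : ∀ a, ∑ b, t a b ≤ Real.sqrt T * x a ^ 2 := by
      intro a
      have hle : ∀ b, t a b ≤
          (if A a b ≠ 0 ∧ b ≠ a then Real.sqrt T / r a * x a ^ 2 else 0) := by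
        intro b
        by_cases hab : a = b
        · subst hab
          rw [htdef]
          simp
        · by_cases hne : M a b = 0
          · have : t a b = 0 := by
              rw [htdef]
              dsimp only
              rw [if_neg hab, hne]
              simp
            rw [this]
            split
            · positivity
            · exact le_refl 0
          · obtain ⟨hA0, hcond, hMA⟩ := hoff a b hab hne
            have hAba : A b a ≠ 0 := by rw [hAsymm]; exact hA0
            have hra : 1 ≤ r a := hr1 a b hA0
            have hrb : 1 ≤ r b := hr1 b a hAba
            have hrapos : 0 < r a := by linarith
            have hsa : 0 < Real.sqrt (r a) := Real.sqrt_pos.2 hrapos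
            rw [if_pos ⟨hA0, fun h => hab h.symm⟩, htdef]
            dsimp only
            rw [if_neg hab]
            have h1' : Real.sqrt (r b) / Real.sqrt (r a) ≤ Real.sqrt T / r a := by
              have e1 : Real.sqrt (r b) / Real.sqrt (r a) = Real.sqrt (r a * r b) / r a := by
                rw [Real.sqrt_mul (hr0 a), div_eq_div_iff hsa.ne' hrapos.ne']
                linear_combination (-Real.sqrt (r b)) * Real.mul_self_sqrt (hr0 a)
              rw [e1]
              exact (div_le_div_iff_of_pos_right hrapos).2 (Real.sqrt_le_sqrt hcond.le)
            calc |M a b| * (Real.sqrt (r b) / Real.sqrt (r a)) * x a ^ 2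
                ≤ 1 * (Real.sqrt T / r a) * x a ^ 2 := by
                  apply mul_le_mul_of_nonneg_right _ (sq_nonneg _)
                  apply mul_le_mul (hMbound a b) h1' (by positivity) (by norm_num)
              _ = Real.sqrt T / r a * x a ^ 2 := by ring
      calc ∑ b, t a b
          ≤ ∑ b, (if A a b ≠ 0 ∧ b ≠ a then Real.sqrt T / r a * x a ^ 2 else 0) :=
            Finset.sum_le_sum fun b _ => hle b
        _ = ((Finset.univ.filter (fun b => A a b ≠ 0 ∧ b ≠ a)).card : ℝ)
              * (Real.sqrt T / r a * x a ^ 2) := by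
            rw [Finset.sum_ite, Finset.sum_const, Finset.sum_const_zero, add_zero,
              nsmul_eq_mul]
        _ ≤ Real.sqrt T * x a ^ 2 := by
            have hcard : ((Finset.univ.filter (fun b => A a b ≠ 0 ∧ b ≠ a)).card : ℝ) ≤ r a := by
              have hss : (Finset.univ.filter (fun b => A a b ≠ 0 ∧ b ≠ a)) ⊆
                  (Finset.univ.filter (fun b => A a b ≠ 0)) := by
                intro b hb
                simp only [Finset.mem_filter] at hb ⊢
                exact ⟨hb.1, hb.2.1⟩
              have hn : ((Finset.univ.filter (fun b => A a b ≠ 0 ∧ b ≠ a)).card : ℝ)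
                  ≤ (nnzRow A a : ℝ) := by exact_mod_cast Finset.card_le_card hss
              exact hn
            rcases eq_or_lt_of_le (hr0 a) with h | h
            · have hc0 : ((Finset.univ.filter (fun b => A a b ≠ 0 ∧ b ≠ a)).card : ℝ) = 0 :=
                le_antisymm (by rw [← h] at hcard; exact hcard) (Nat.cast_nonneg _)
              rw [hc0, zero_mul]
              positivity
            · calc ((Finset.univ.filter (fun b => A a b ≠ 0 ∧ b ≠ a)).card : ℝ)
                    * (Real.sqrt T / r a * x a ^ 2)
                  ≤ r a * (Real.sqrt T / r a * x a ^ 2) :=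
                    mul_le_mul_of_nonneg_right hcard (by positivity)
                _ = Real.sqrt T * x a ^ 2 := by field_simp
    calc |∑ a, ∑ b, M a b * x a * x b|
        ≤ ∑ a, ∑ b, |M a b * x a * x b| := by
          refine (Finset.abs_sum_le_sum_abs _ _).trans ?_
          exact Finset.sum_le_sum fun a _ => Finset.abs_sum_le_sum_abs _ _
      _ ≤ ∑ a, ∑ b, ((if a = b then x a ^ 2 else 0) + (t a b + t b a) / 2) :=
          Finset.sum_le_sum fun a _ => Finset.sum_le_sum fun b _ => hterm a b
      _ = ∑ a, x a ^ 2 + (∑ a, ∑ b, t a b + ∑ a, ∑ b, t b a) / 2 := by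
          have e1 : ∀ a : Fin n, ∑ b, ((if a = b then x a ^ 2 else 0) + (t a b + t b a) / 2)
              = x a ^ 2 + (∑ b, t a b + ∑ b, t b a) / 2 := by
            intro a
            rw [Finset.sum_add_distrib, Finset.sum_ite_eq, if_pos (Finset.mem_univ a)]
            congr 1
            rw [← Finset.sum_div, Finset.sum_add_distrib]
          rw [Finset.sum_congr rfl (fun a _ => e1 a), Finset.sum_add_distrib]
          congr 1
          rw [← Finset.sum_div, Finset.sum_add_distrib]
      _ = ∑ a, x a ^ 2 + ∑ a, ∑ b, t a b := by
          rw [Finset.sum_comm (f := fun a b => t b a)]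
          ring
      _ ≤ ∑ a, x a ^ 2 + ∑ a, Real.sqrt T * x a ^ 2 :=
          add_le_add_right (Finset.sum_le_sum fun a _ => hrow a) _
      _ = (1 + Real.sqrt T) * ‖x‖ ^ 2 := by
          rw [← Finset.mul_sum, hx2 x]
          ring
  set C : ℝ := 1 + Real.sqrt T with hCdef
  have hC1 : ∀ x : EuclideanSpace ℝ (Fin n),
      ⟪x, toEuclideanLin (A - A') x⟫ ≤ C * ‖x‖ ^ 2 :=
    fun x => (le_abs_self _).trans (hQ x)
  have hC2 : ∀ x : EuclideanSpace ℝ (Fin n),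
      ⟪x, toEuclideanLin (A' - A) x⟫ ≤ C * ‖x‖ ^ 2 := by
    intro x
    have hneg : A' - A = -(A - A') := (neg_sub _ _).symm
    rw [hneg, map_neg, LinearMap.neg_apply, inner_neg_right]
    have := (abs_le.1 (hQ x)).1
    linarith
  have w1 := weyl_one hA hA' σ τ hσ hτ C hC1 i
  have w2 := weyl_one hA' hA τ σ hτ hσ C hC2 i
  have hCle : C ≤ ε * Real.sqrt m := by
    rw [hCdef]
    linarith
  exact abs_sub_le_iff.2 ⟨by linarith, by linarith⟩
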